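/- The mutation-finite matrix of type F_4 admits an unfolding: the 6×6 skew-symmetric matrix C with rows (0, 0, 1, 0, 0, 0), (0, 0, 0, 1, 0, 0), (−1, 0, 0, 0, 1, 0), (0, −1, 0, 0, 1, 0), (0, 0, −1, −1, 0, 1), (0, 0, 0, 0, −1, 0) is an unfolding of the 4×4 skew-symmetrizable matrix B with rows (0, 1, 0, 0), (−1, 0, 2, 0), (0, −1, 0, 1), (0, 0, −1, 0), with respect to the index sets E_1 = {1, 2}, E_2 = {3, 4}, E_3 = {5}, E_4 = {6}. -/

import Mathlib

open Matrix

/-- Matrix mutation in direction `k`. -/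
def mutate {n : ℕ} (B : Matrix (Fin n) (Fin n) ℤ) (k : Fin n) : Matrix (Fin n) (Fin n) ℤ :=
  Matrix.of fun i j =>
    if i = k ∨ j = k then -B i j
    else B i j + (|B i k| * B k j + B i k * |B k j|) / 2

/-- The mutation class of `B`: all matrices obtained from `B` by finite sequences of mutations. -/
def mutationClass {n : ℕ} (B : Matrix (Fin n) (Fin n) ℤ) : Set (Matrix (Fin n) (Fin n) ℤ) :=
  {B' | ∃ l : List (Fin n), B' = l.foldl mutate B}

/-- `B` is skew-symmetrizable: there are positive integers `d i` with `b_ij d_j = -(b_ji d_i)`. -/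
def IsSkewSymmetrizable {n : ℕ} (B : Matrix (Fin n) (Fin n) ℤ) : Prop :=
  ∃ d : Fin n → ℤ, (∀ i, 0 < d i) ∧ ∀ i j, B i j * d j = -(B j i * d i)

/-- Assertions (1)–(2) of the definition of unfolding, for the fibers `E i = π ⁻¹ {i}`:
(1) for all `i` and all `b` the sum of `C a b` over `a ∈ E i` equals `B i (π b)`;
(2) if `B (π a) (π b) ≥ 0` then `C a b ≥ 0`. -/
def SatisfiesUnfoldingConds {m n : ℕ} (π : Fin m → Fin n)
    (B : Matrix (Fin n) (Fin n) ℤ) (C : Matrix (Fin m) (Fin m) ℤ) : Prop :=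
  (∀ (i : Fin n) (b : Fin m),
      (∑ a ∈ Finset.univ.filter (fun a => π a = i), C a b) = B i (π b)) ∧
  (∀ a b : Fin m, 0 ≤ B (π a) (π b) → 0 ≤ C a b)

/-- The composite mutation `μ̂_i`: the composition of the mutations `μ_a` over all
`a ∈ E i = π ⁻¹ {i}`, performed in a fixed order. -/
def compMutate {m n : ℕ} (π : Fin m → Fin n) (C : Matrix (Fin m) (Fin m) ℤ)
    (i : Fin n) : Matrix (Fin m) (Fin m) ℤ :=
  ((Finset.univ.filter (fun a => π a = i)).sort (· ≤ ·)).foldl mutate C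

/-- `C` is an unfolding of `B` (w.r.t. the index sets `E i = π ⁻¹ {i}`): after any finite
sequence of composite mutations, assertions (1)–(2) hold for the correspondingly
mutated matrices. -/
def IsUnfolding {m n : ℕ} (π : Fin m → Fin n) (B : Matrix (Fin n) (Fin n) ℤ)
    (C : Matrix (Fin m) (Fin m) ℤ) : Prop :=
  ∀ l : List (Fin n),
    SatisfiesUnfoldingConds π (l.foldl mutate B) (l.foldl (compMutate π) C)

/-! ### Auxiliary material for the proof -/

/-- The fibers of `![0,0,1,1,2,3]`, as sorted lists. -/
def fibList : Fin 4 → List (Fin 6) := ![[0, 1], [2, 3], [4], [5]]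

lemma sort_fiber0 :
    ((Finset.univ.filter (fun a => (![0, 0, 1, 1, 2, 3] : Fin 6 → Fin 4) a = 0)).sort (· ≤ ·))
      = [0, 1] := by
  have h : (Finset.univ.filter (fun a => (![0, 0, 1, 1, 2, 3] : Fin 6 → Fin 4) a = 0))
      = insert (0 : Fin 6) {1} := by decide
  rw [h, Finset.sort_insert (· ≤ ·) (by decide) (by decide), Finset.sort_singleton]

lemma sort_fiber1 :
    ((Finset.univ.filter (fun a => (![0, 0, 1, 1, 2, 3] : Fin 6 → Fin 4) a = 1)).sort (· ≤ ·))
      = [2, 3] := by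
  have h : (Finset.univ.filter (fun a => (![0, 0, 1, 1, 2, 3] : Fin 6 → Fin 4) a = 1))
      = insert (2 : Fin 6) {3} := by decide
  rw [h, Finset.sort_insert (· ≤ ·) (by decide) (by decide), Finset.sort_singleton]

lemma sort_fiber2 :
    ((Finset.univ.filter (fun a => (![0, 0, 1, 1, 2, 3] : Fin 6 → Fin 4) a = 2)).sort (· ≤ ·))
      = [4] := by
  have h : (Finset.univ.filter (fun a => (![0, 0, 1, 1, 2, 3] : Fin 6 → Fin 4) a = 2))
      = ({4} : Finset (Fin 6)) := by decide
  rw [h, Finset.sort_singleton]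

lemma sort_fiber3 :
    ((Finset.univ.filter (fun a => (![0, 0, 1, 1, 2, 3] : Fin 6 → Fin 4) a = 3)).sort (· ≤ ·))
      = [5] := by
  have h : (Finset.univ.filter (fun a => (![0, 0, 1, 1, 2, 3] : Fin 6 → Fin 4) a = 3))
      = ({5} : Finset (Fin 6)) := by decide
  rw [h, Finset.sort_singleton]

lemma compMutate_eq (C : Matrix (Fin 6) (Fin 6) ℤ) (i : Fin 4) :
    compMutate (![0, 0, 1, 1, 2, 3] : Fin 6 → Fin 4) C i = (fibList i).foldl mutate C := by
  fin_cases i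
  · exact congrArg (fun L => L.foldl mutate C) sort_fiber0
  · exact congrArg (fun L => L.foldl mutate C) sort_fiber1
  · exact congrArg (fun L => L.foldl mutate C) sort_fiber2
  · exact congrArg (fun L => L.foldl mutate C) sort_fiber3

set_option maxHeartbeats 4000000 in
def goodP0 : List (Matrix (Fin 4) (Fin 4) ℤ × Matrix (Fin 6) (Fin 6) ℤ) :=
  [(!![0, 1, 0, 0; -1, 0, 2, 0; 0, -1, 0, 1; 0, 0, -1, 0], !![0, 0, 1, 0, 0, 0; 0, 0, 0, 1, 0, 0; -1, 0, 0, 0, 1, 0; 0, -1, 0, 0, 1, 0; 0, 0, -1, -1, 0, 1; 0, 0, 0, 0, -1, 0]),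
  (!![0, -1, 0, 0; 1, 0, 2, 0; 0, -1, 0, 1; 0, 0, -1, 0], !![0, 0, -1, 0, 0, 0; 0, 0, 0, -1, 0, 0; 1, 0, 0, 0, 1, 0; 0, 1, 0, 0, 1, 0; 0, 0, -1, -1, 0, 1; 0, 0, 0, 0, -1, 0]),
  (!![0, -1, 2, 0; 1, 0, -2, 0; -1, 1, 0, 1; 0, 0, -1, 0], !![0, 0, -1, 0, 1, 0; 0, 0, 0, -1, 1, 0; 1, 0, 0, 0, -1, 0; 0, 1, 0, 0, -1, 0; -1, -1, 1, 1, 0, 1; 0, 0, 0, 0, -1, 0]),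
  (!![0, 1, 0, 0; -1, 0, -2, 2; 0, 1, 0, -1; 0, -1, 1, 0], !![0, 0, 1, 0, 0, 0; 0, 0, 0, 1, 0, 0; -1, 0, 0, 0, -1, 1; 0, -1, 0, 0, -1, 1; 0, 0, 1, 1, 0, -1; 0, 0, -1, -1, 1, 0]),
  (!![0, 1, 0, 0; -1, 0, 2, 0; 0, -1, 0, -1; 0, 0, 1, 0], !![0, 0, 1, 0, 0, 0; 0, 0, 0, 1, 0, 0; -1, 0, 0, 0, 1, 0; 0, -1, 0, 0, 1, 0; 0, 0, -1, -1, 0, -1; 0, 0, 0, 0, 1, 0]),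
  (!![0, 1, 0, 0; -1, 0, -2, 0; 0, 1, 0, 1; 0, 0, -1, 0], !![0, 0, 1, 0, 0, 0; 0, 0, 0, 1, 0, 0; -1, 0, 0, 0, -1, 0; 0, -1, 0, 0, -1, 0; 0, 0, 1, 1, 0, 1; 0, 0, 0, 0, -1, 0]),
  (!![0, -1, 0, 0; 1, 0, -2, 2; 0, 1, 0, -1; 0, -1, 1, 0], !![0, 0, -1, 0, 0, 0; 0, 0, 0, -1, 0, 0; 1, 0, 0, 0, -1, 1; 0, 1, 0, 0, -1, 1; 0, 0, 1, 1, 0, -1; 0, 0, -1, -1, 1, 0]),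
  (!![0, -1, 0, 0; 1, 0, 2, 0; 0, -1, 0, -1; 0, 0, 1, 0], !![0, 0, -1, 0, 0, 0; 0, 0, 0, -1, 0, 0; 1, 0, 0, 0, 1, 0; 0, 1, 0, 0, 1, 0; 0, 0, -1, -1, 0, -1; 0, 0, 0, 0, 1, 0]),
  (!![0, 1, -2, 0; -1, 0, 0, 0; 1, 0, 0, 1; 0, 0, -1, 0], !![0, 0, 1, 0, -1, 0; 0, 0, 0, 1, -1, 0; -1, 0, 0, 0, 0, 0; 0, -1, 0, 0, 0, 0; 1, 1, 0, 0, 0, 1; 0, 0, 0, 0, -1, 0]),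
  (!![0, 1, -2, 2; -1, 0, 2, 0; 1, -1, 0, -1; -1, 0, 1, 0], !![0, 0, 0, 1, -1, 1; 0, 0, 1, 0, -1, 1; 0, -1, 0, 0, 1, 0; -1, 0, 0, 0, 1, 0; 1, 1, -1, -1, 0, -1; -1, -1, 0, 0, 1, 0]),
  (!![0, -1, 2, 0; 1, 0, -2, 0; -1, 1, 0, -1; 0, 0, 1, 0], !![0, 0, -1, 0, 1, 0; 0, 0, 0, -1, 1, 0; 1, 0, 0, 0, -1, 0; 0, 1, 0, 0, -1, 0; -1, -1, 1, 1, 0, -1; 0, 0, 0, 0, 1, 0]),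
  (!![0, -1, 0, 2; 1, 0, 2, -2; 0, -1, 0, 1; -1, 1, -1, 0], !![0, 0, -1, 0, 0, 1; 0, 0, 0, -1, 0, 1; 1, 0, 0, 0, 1, -1; 0, 1, 0, 0, 1, -1; 0, 0, -1, -1, 0, 1; -1, -1, 1, 1, -1, 0])]

def goodP1 : List (Matrix (Fin 4) (Fin 4) ℤ × Matrix (Fin 6) (Fin 6) ℤ) :=
  [(!![0, 1, 0, 0; -1, 0, 0, -2; 0, 0, 0, 1; 0, 1, -1, 0], !![0, 0, 1, 0, 0, 0; 0, 0, 0, 1, 0, 0; -1, 0, 0, 0, 0, -1; 0, -1, 0, 0, 0, -1; 0, 0, 0, 0, 0, 1; 0, 0, 1, 1, -1, 0]),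
  (!![0, -1, 0, 0; 1, 0, -2, 0; 0, 1, 0, 1; 0, 0, -1, 0], !![0, 0, -1, 0, 0, 0; 0, 0, 0, -1, 0, 0; 1, 0, 0, 0, -1, 0; 0, 1, 0, 0, -1, 0; 0, 0, 1, 1, 0, 1; 0, 0, 0, 0, -1, 0]),
  (!![0, 1, 0, 0; -1, 0, -2, 0; 0, 1, 0, -1; 0, 0, 1, 0], !![0, 0, 1, 0, 0, 0; 0, 0, 0, 1, 0, 0; -1, 0, 0, 0, -1, 0; 0, -1, 0, 0, -1, 0; 0, 0, 1, 1, 0, -1; 0, 0, 0, 0, 1, 0]),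
  (!![0, 1, -2, 0; -1, 0, 2, -2; 1, -1, 0, 1; 0, 1, -1, 0], !![0, 0, 1, 0, -1, 0; 0, 0, 0, 1, -1, 0; -1, 0, 0, 0, 1, -1; 0, -1, 0, 0, 1, -1; 1, 1, -1, -1, 0, 1; 0, 0, 1, 1, -1, 0]),
  (!![0, -1, 0, 0; 1, 0, 0, -2; 0, 0, 0, 1; 0, 1, -1, 0], !![0, 0, -1, 0, 0, 0; 0, 0, 0, -1, 0, 0; 1, 0, 0, 0, 0, -1; 0, 1, 0, 0, 0, -1; 0, 0, 0, 0, 0, 1; 0, 0, 1, 1, -1, 0]),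
  (!![0, -1, -2, 0; 1, 0, 0, 0; 1, 0, 0, 1; 0, 0, -1, 0], !![0, 0, -1, 0, -1, 0; 0, 0, 0, -1, -1, 0; 1, 0, 0, 0, 0, 0; 0, 1, 0, 0, 0, 0; 1, 1, 0, 0, 0, 1; 0, 0, 0, 0, -1, 0]),
  (!![0, 1, 2, 0; -1, 0, 0, 0; -1, 0, 0, -1; 0, 0, 1, 0], !![0, 0, 1, 0, 1, 0; 0, 0, 0, 1, 1, 0; -1, 0, 0, 0, 0, 0; 0, -1, 0, 0, 0, 0; -1, -1, 0, 0, 0, -1; 0, 0, 0, 0, 1, 0]),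
  (!![0, 1, -2, 0; -1, 0, 0, 0; 1, 0, 0, -1; 0, 0, 1, 0], !![0, 0, 1, 0, -1, 0; 0, 0, 0, 1, -1, 0; -1, 0, 0, 0, 0, 0; 0, -1, 0, 0, 0, 0; 1, 1, 0, 0, 0, -1; 0, 0, 0, 0, 1, 0]),
  (!![0, -1, 2, -2; 1, 0, 0, 0; -1, 0, 0, 1; 1, 0, -1, 0], !![0, 0, 0, -1, 1, -1; 0, 0, -1, 0, 1, -1; 0, 1, 0, 0, 0, 0; 1, 0, 0, 0, 0, 0; -1, -1, 0, 0, 0, 1; 1, 1, 0, 0, -1, 0]),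
  (!![0, -1, 0, 2; 1, 0, -2, 0; 0, 1, 0, -1; -1, 0, 1, 0], !![0, 0, 0, -1, 0, 1; 0, 0, -1, 0, 0, 1; 0, 1, 0, 0, -1, 0; 1, 0, 0, 0, -1, 0; 0, 0, 1, 1, 0, -1; -1, -1, 0, 0, 1, 0]),
  (!![0, 1, 0, -2; -1, 0, 2, 0; 0, -1, 0, 1; 1, 0, -1, 0], !![0, 0, 0, 1, 0, -1; 0, 0, 1, 0, 0, -1; 0, -1, 0, 0, 1, 0; -1, 0, 0, 0, 1, 0; 0, 0, -1, -1, 0, 1; 1, 1, 0, 0, -1, 0]),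
  (!![0, 1, -2, 0; -1, 0, 2, -2; 1, -1, 0, 1; 0, 1, -1, 0], !![0, 0, 0, 1, -1, 0; 0, 0, 1, 0, -1, 0; 0, -1, 0, 0, 1, -1; -1, 0, 0, 0, 1, -1; 1, 1, -1, -1, 0, 1; 0, 0, 1, 1, -1, 0])]

def goodP2 : List (Matrix (Fin 4) (Fin 4) ℤ × Matrix (Fin 6) (Fin 6) ℤ) :=
  [(!![0, 1, 0, -2; -1, 0, 2, 0; 0, -1, 0, 1; 1, 0, -1, 0], !![0, 0, 1, 0, 0, -1; 0, 0, 0, 1, 0, -1; -1, 0, 0, 0, 1, 0; 0, -1, 0, 0, 1, 0; 0, 0, -1, -1, 0, 1; 1, 1, 0, 0, -1, 0]),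
  (!![0, -1, 0, 2; 1, 0, -2, 0; 0, 1, 0, -1; -1, 0, 1, 0], !![0, 0, -1, 0, 0, 1; 0, 0, 0, -1, 0, 1; 1, 0, 0, 0, -1, 0; 0, 1, 0, 0, -1, 0; 0, 0, 1, 1, 0, -1; -1, -1, 0, 0, 1, 0]),
  (!![0, 1, 0, -2; -1, 0, 0, 2; 0, 0, 0, -1; 1, -1, 1, 0], !![0, 0, 0, 1, 0, -1; 0, 0, 1, 0, 0, -1; 0, -1, 0, 0, 0, 1; -1, 0, 0, 0, 0, 1; 0, 0, 0, 0, 0, -1; 1, 1, -1, -1, 1, 0]),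
  (!![0, -1, 0, 0; 1, 0, 0, 2; 0, 0, 0, 1; 0, -1, -1, 0], !![0, 0, -1, 0, 0, 0; 0, 0, 0, -1, 0, 0; 1, 0, 0, 0, 0, 1; 0, 1, 0, 0, 0, 1; 0, 0, 0, 0, 0, 1; 0, 0, -1, -1, -1, 0]),
  (!![0, 1, 0, 0; -1, 0, 0, -2; 0, 0, 0, -1; 0, 1, 1, 0], !![0, 0, 1, 0, 0, 0; 0, 0, 0, 1, 0, 0; -1, 0, 0, 0, 0, -1; 0, -1, 0, 0, 0, -1; 0, 0, 0, 0, 0, -1; 0, 0, 1, 1, 1, 0]),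
  (!![0, 1, -2, 0; -1, 0, 2, 0; 1, -1, 0, 1; 0, 0, -1, 0], !![0, 0, 1, 0, -1, 0; 0, 0, 0, 1, -1, 0; -1, 0, 0, 0, 1, 0; 0, -1, 0, 0, 1, 0; 1, 1, -1, -1, 0, 1; 0, 0, 0, 0, -1, 0]),
  (!![0, -1, 0, 0; 1, 0, -2, 0; 0, 1, 0, -1; 0, 0, 1, 0], !![0, 0, -1, 0, 0, 0; 0, 0, 0, -1, 0, 0; 1, 0, 0, 0, -1, 0; 0, 1, 0, 0, -1, 0; 0, 0, 1, 1, 0, -1; 0, 0, 0, 0, 1, 0]),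
  (!![0, 1, 0, 0; -1, 0, 2, -2; 0, -1, 0, 1; 0, 1, -1, 0], !![0, 0, 1, 0, 0, 0; 0, 0, 0, 1, 0, 0; -1, 0, 0, 0, 1, -1; 0, -1, 0, 0, 1, -1; 0, 0, -1, -1, 0, 1; 0, 0, 1, 1, -1, 0]),
  (!![0, -1, 2, 0; 1, 0, 0, -2; -1, 0, 0, 1; 0, 1, -1, 0], !![0, 0, -1, 0, 1, 0; 0, 0, 0, -1, 1, 0; 1, 0, 0, 0, 0, -1; 0, 1, 0, 0, 0, -1; -1, -1, 0, 0, 0, 1; 0, 0, 1, 1, -1, 0]),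
  (!![0, -1, 2, 0; 1, 0, -2, 0; -1, 1, 0, -1; 0, 0, 1, 0], !![0, 0, 0, -1, 1, 0; 0, 0, -1, 0, 1, 0; 0, 1, 0, 0, -1, 0; 1, 0, 0, 0, -1, 0; -1, -1, 1, 1, 0, -1; 0, 0, 0, 0, 1, 0]),
  (!![0, 1, -2, 0; -1, 0, 0, 2; 1, 0, 0, -1; 0, -1, 1, 0], !![0, 0, 1, 0, -1, 0; 0, 0, 0, 1, -1, 0; -1, 0, 0, 0, 0, 1; 0, -1, 0, 0, 0, 1; 1, 1, 0, 0, 0, -1; 0, 0, -1, -1, 1, 0]),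
  (!![0, 1, 0, -2; -1, 0, 0, 2; 0, 0, 0, 1; 1, -1, -1, 0], !![0, 0, 1, 0, 0, -1; 0, 0, 0, 1, 0, -1; -1, 0, 0, 0, 0, 1; 0, -1, 0, 0, 0, 1; 0, 0, 0, 0, 0, 1; 1, 1, -1, -1, -1, 0])]

def goodP3 : List (Matrix (Fin 4) (Fin 4) ℤ × Matrix (Fin 6) (Fin 6) ℤ) :=
  [(!![0, -1, 0, 0; 1, 0, 0, -2; 0, 0, 0, -1; 0, 1, 1, 0], !![0, 0, -1, 0, 0, 0; 0, 0, 0, -1, 0, 0; 1, 0, 0, 0, 0, -1; 0, 1, 0, 0, 0, -1; 0, 0, 0, 0, 0, -1; 0, 0, 1, 1, 1, 0]),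
  (!![0, 1, 2, 0; -1, 0, 0, 0; -1, 0, 0, 1; 0, 0, -1, 0], !![0, 0, 1, 0, 1, 0; 0, 0, 0, 1, 1, 0; -1, 0, 0, 0, 0, 0; 0, -1, 0, 0, 0, 0; -1, -1, 0, 0, 0, 1; 0, 0, 0, 0, -1, 0]),
  (!![0, -1, 2, 0; 1, 0, 0, 0; -1, 0, 0, -1; 0, 0, 1, 0], !![0, 0, -1, 0, 1, 0; 0, 0, 0, -1, 1, 0; 1, 0, 0, 0, 0, 0; 0, 1, 0, 0, 0, 0; -1, -1, 0, 0, 0, -1; 0, 0, 0, 0, 1, 0]),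
  (!![0, -1, -2, 0; 1, 0, 0, 0; 1, 0, 0, -1; 0, 0, 1, 0], !![0, 0, -1, 0, -1, 0; 0, 0, 0, -1, -1, 0; 1, 0, 0, 0, 0, 0; 0, 1, 0, 0, 0, 0; 1, 1, 0, 0, 0, -1; 0, 0, 0, 0, 1, 0]),
  (!![0, 1, 2, -2; -1, 0, 0, 0; -1, 0, 0, 1; 1, 0, -1, 0], !![0, 0, 1, 0, 1, -1; 0, 0, 0, 1, 1, -1; -1, 0, 0, 0, 0, 0; 0, -1, 0, 0, 0, 0; -1, -1, 0, 0, 0, 1; 1, 1, 0, 0, -1, 0]),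
  (!![0, 1, 2, -2; -1, 0, 0, 0; -1, 0, 0, 1; 1, 0, -1, 0], !![0, 0, 0, 1, 1, -1; 0, 0, 1, 0, 1, -1; 0, -1, 0, 0, 0, 0; -1, 0, 0, 0, 0, 0; -1, -1, 0, 0, 0, 1; 1, 1, 0, 0, -1, 0]),
  (!![0, -1, -2, 0; 1, 0, 0, 0; 1, 0, 0, -1; 0, 0, 1, 0], !![0, 0, 0, -1, -1, 0; 0, 0, -1, 0, -1, 0; 0, 1, 0, 0, 0, 0; 1, 0, 0, 0, 0, 0; 1, 1, 0, 0, 0, -1; 0, 0, 0, 0, 1, 0]),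
  (!![0, -1, 0, 2; 1, 0, 0, 0; 0, 0, 0, -1; -1, 0, 1, 0], !![0, 0, 0, -1, 0, 1; 0, 0, -1, 0, 0, 1; 0, 1, 0, 0, 0, 0; 1, 0, 0, 0, 0, 0; 0, 0, 0, 0, 0, -1; -1, -1, 0, 0, 1, 0]),
  (!![0, 1, 0, -2; -1, 0, -2, 2; 0, 1, 0, -1; 1, -1, 1, 0], !![0, 0, 0, 1, 0, -1; 0, 0, 1, 0, 0, -1; 0, -1, 0, 0, -1, 1; -1, 0, 0, 0, -1, 1; 0, 0, 1, 1, 0, -1; 1, 1, -1, -1, 1, 0]),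
  (!![0, -1, 0, 2; 1, 0, 2, -2; 0, -1, 0, 1; -1, 1, -1, 0], !![0, 0, 0, -1, 0, 1; 0, 0, -1, 0, 0, 1; 0, 1, 0, 0, 1, -1; 1, 0, 0, 0, 1, -1; 0, 0, -1, -1, 0, 1; -1, -1, 1, 1, -1, 0]),
  (!![0, -1, 2, -2; 1, 0, -2, 0; -1, 1, 0, 1; 1, 0, -1, 0], !![0, 0, 0, -1, 1, -1; 0, 0, -1, 0, 1, -1; 0, 1, 0, 0, -1, 0; 1, 0, 0, 0, -1, 0; -1, -1, 1, 1, 0, 1; 1, 1, 0, 0, -1, 0]),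
  (!![0, -1, 2, 0; 1, 0, 0, -2; -1, 0, 0, 1; 0, 1, -1, 0], !![0, 0, 0, -1, 1, 0; 0, 0, -1, 0, 1, 0; 0, 1, 0, 0, 0, -1; 1, 0, 0, 0, 0, -1; -1, -1, 0, 0, 0, 1; 0, 0, 1, 1, -1, 0])]

def goodP4 : List (Matrix (Fin 4) (Fin 4) ℤ × Matrix (Fin 6) (Fin 6) ℤ) :=
  [(!![0, -1, 0, 0; 1, 0, -2, 2; 0, 1, 0, -1; 0, -1, 1, 0], !![0, 0, 0, -1, 0, 0; 0, 0, -1, 0, 0, 0; 0, 1, 0, 0, -1, 1; 1, 0, 0, 0, -1, 1; 0, 0, 1, 1, 0, -1; 0, 0, -1, -1, 1, 0]),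
  (!![0, 1, -2, 0; -1, 0, 0, 2; 1, 0, 0, -1; 0, -1, 1, 0], !![0, 0, 0, 1, -1, 0; 0, 0, 1, 0, -1, 0; 0, -1, 0, 0, 0, 1; -1, 0, 0, 0, 0, 1; 1, 1, 0, 0, 0, -1; 0, 0, -1, -1, 1, 0]),
  (!![0, -1, 2, -2; 1, 0, -2, 0; -1, 1, 0, 1; 1, 0, -1, 0], !![0, 0, -1, 0, 1, -1; 0, 0, 0, -1, 1, -1; 1, 0, 0, 0, -1, 0; 0, 1, 0, 0, -1, 0; -1, -1, 1, 1, 0, 1; 1, 1, 0, 0, -1, 0]),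
  (!![0, 1, 0, -2; -1, 0, -2, 2; 0, 1, 0, -1; 1, -1, 1, 0], !![0, 0, 1, 0, 0, -1; 0, 0, 0, 1, 0, -1; -1, 0, 0, 0, -1, 1; 0, -1, 0, 0, -1, 1; 0, 0, 1, 1, 0, -1; 1, 1, -1, -1, 1, 0]),
  (!![0, 1, -2, 2; -1, 0, 2, 0; 1, -1, 0, -1; -1, 0, 1, 0], !![0, 0, 1, 0, -1, 1; 0, 0, 0, 1, -1, 1; -1, 0, 0, 0, 1, 0; 0, -1, 0, 0, 1, 0; 1, 1, -1, -1, 0, -1; -1, -1, 0, 0, 1, 0]),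
  (!![0, -1, 0, 0; 1, 0, 0, -2; 0, 0, 0, -1; 0, 1, 1, 0], !![0, 0, 0, -1, 0, 0; 0, 0, -1, 0, 0, 0; 0, 1, 0, 0, 0, -1; 1, 0, 0, 0, 0, -1; 0, 0, 0, 0, 0, -1; 0, 0, 1, 1, 1, 0]),
  (!![0, 1, 0, -2; -1, 0, 0, 2; 0, 0, 0, 1; 1, -1, -1, 0], !![0, 0, 0, 1, 0, -1; 0, 0, 1, 0, 0, -1; 0, -1, 0, 0, 0, 1; -1, 0, 0, 0, 0, 1; 0, 0, 0, 0, 0, 1; 1, 1, -1, -1, -1, 0]),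
  (!![0, 1, 0, 0; -1, 0, 0, 2; 0, 0, 0, 1; 0, -1, -1, 0], !![0, 0, 1, 0, 0, 0; 0, 0, 0, 1, 0, 0; -1, 0, 0, 0, 0, 1; 0, -1, 0, 0, 0, 1; 0, 0, 0, 0, 0, 1; 0, 0, -1, -1, -1, 0]),
  (!![0, -1, 0, 0; 1, 0, 0, 2; 0, 0, 0, -1; 0, -1, 1, 0], !![0, 0, -1, 0, 0, 0; 0, 0, 0, -1, 0, 0; 1, 0, 0, 0, 0, 1; 0, 1, 0, 0, 0, 1; 0, 0, 0, 0, 0, -1; 0, 0, -1, -1, 1, 0]),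
  (!![0, -1, 2, 0; 1, 0, 0, 0; -1, 0, 0, 1; 0, 0, -1, 0], !![0, 0, -1, 0, 1, 0; 0, 0, 0, -1, 1, 0; 1, 0, 0, 0, 0, 0; 0, 1, 0, 0, 0, 0; -1, -1, 0, 0, 0, 1; 0, 0, 0, 0, -1, 0]),
  (!![0, -1, 2, 0; 1, 0, -2, 2; -1, 1, 0, -1; 0, -1, 1, 0], !![0, 0, 0, -1, 1, 0; 0, 0, -1, 0, 1, 0; 0, 1, 0, 0, -1, 1; 1, 0, 0, 0, -1, 1; -1, -1, 1, 1, 0, -1; 0, 0, -1, -1, 1, 0]),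
  (!![0, 1, -2, 0; -1, 0, 2, 0; 1, -1, 0, -1; 0, 0, 1, 0], !![0, 0, 1, 0, -1, 0; 0, 0, 0, 1, -1, 0; -1, 0, 0, 0, 1, 0; 0, -1, 0, 0, 1, 0; 1, 1, -1, -1, 0, -1; 0, 0, 0, 0, 1, 0])]

def goodP5 : List (Matrix (Fin 4) (Fin 4) ℤ × Matrix (Fin 6) (Fin 6) ℤ) :=
  [(!![0, -1, 0, 0; 1, 0, 2, -2; 0, -1, 0, 1; 0, 1, -1, 0], !![0, 0, -1, 0, 0, 0; 0, 0, 0, -1, 0, 0; 1, 0, 0, 0, 1, -1; 0, 1, 0, 0, 1, -1; 0, 0, -1, -1, 0, 1; 0, 0, 1, 1, -1, 0]),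
  (!![0, -1, 2, 0; 1, 0, -2, 2; -1, 1, 0, -1; 0, -1, 1, 0], !![0, 0, -1, 0, 1, 0; 0, 0, 0, -1, 1, 0; 1, 0, 0, 0, -1, 1; 0, 1, 0, 0, -1, 1; -1, -1, 1, 1, 0, -1; 0, 0, -1, -1, 1, 0]),
  (!![0, 1, 0, 0; -1, 0, 0, 2; 0, 0, 0, -1; 0, -1, 1, 0], !![0, 0, 1, 0, 0, 0; 0, 0, 0, 1, 0, 0; -1, 0, 0, 0, 0, 1; 0, -1, 0, 0, 0, 1; 0, 0, 0, 0, 0, -1; 0, 0, -1, -1, 1, 0]),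
  (!![0, 1, 2, -2; -1, 0, 0, 2; -1, 0, 0, 1; 1, -1, -1, 0], !![0, 0, 1, 0, 1, -1; 0, 0, 0, 1, 1, -1; -1, 0, 0, 0, 0, 1; 0, -1, 0, 0, 0, 1; -1, -1, 0, 0, 0, 1; 1, 1, -1, -1, -1, 0]),
  (!![0, -1, -2, 2; 1, 0, 0, -2; 1, 0, 0, -1; -1, 1, 1, 0], !![0, 0, -1, 0, -1, 1; 0, 0, 0, -1, -1, 1; 1, 0, 0, 0, 0, -1; 0, 1, 0, 0, 0, -1; 1, 1, 0, 0, 0, -1; -1, -1, 1, 1, 1, 0]),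
  (!![0, 1, -2, 0; -1, 0, 0, 0; 1, 0, 0, -1; 0, 0, 1, 0], !![0, 0, 0, 1, -1, 0; 0, 0, 1, 0, -1, 0; 0, -1, 0, 0, 0, 0; -1, 0, 0, 0, 0, 0; 1, 1, 0, 0, 0, -1; 0, 0, 0, 0, 1, 0]),
  (!![0, 1, 0, 0; -1, 0, 2, 0; 0, -1, 0, -1; 0, 0, 1, 0], !![0, 0, 0, 1, 0, 0; 0, 0, 1, 0, 0, 0; 0, -1, 0, 0, 1, 0; -1, 0, 0, 0, 1, 0; 0, 0, -1, -1, 0, -1; 0, 0, 0, 0, 1, 0]),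
  (!![0, -1, 2, 0; 1, 0, -2, 0; -1, 1, 0, 1; 0, 0, -1, 0], !![0, 0, 0, -1, 1, 0; 0, 0, -1, 0, 1, 0; 0, 1, 0, 0, -1, 0; 1, 0, 0, 0, -1, 0; -1, -1, 1, 1, 0, 1; 0, 0, 0, 0, -1, 0]),
  (!![0, -1, 0, 2; 1, 0, 0, 0; 0, 0, 0, 1; -1, 0, -1, 0], !![0, 0, -1, 0, 0, 1; 0, 0, 0, -1, 0, 1; 1, 0, 0, 0, 0, 0; 0, 1, 0, 0, 0, 0; 0, 0, 0, 0, 0, 1; -1, -1, 0, 0, -1, 0]),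
  (!![0, 1, 0, -2; -1, 0, 0, 2; 0, 0, 0, -1; 1, -1, 1, 0], !![0, 0, 1, 0, 0, -1; 0, 0, 0, 1, 0, -1; -1, 0, 0, 0, 0, 1; 0, -1, 0, 0, 0, 1; 0, 0, 0, 0, 0, -1; 1, 1, -1, -1, 1, 0]),
  (!![0, -1, -2, 2; 1, 0, 0, -2; 1, 0, 0, -1; -1, 1, 1, 0], !![0, 0, 0, -1, -1, 1; 0, 0, -1, 0, -1, 1; 0, 1, 0, 0, 0, -1; 1, 0, 0, 0, 0, -1; 1, 1, 0, 0, 0, -1; -1, -1, 1, 1, 1, 0]),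
  (!![0, 1, -2, 2; -1, 0, 0, 0; 1, 0, 0, -1; -1, 0, 1, 0], !![0, 0, 1, 0, -1, 1; 0, 0, 0, 1, -1, 1; -1, 0, 0, 0, 0, 0; 0, -1, 0, 0, 0, 0; 1, 1, 0, 0, 0, -1; -1, -1, 0, 0, 1, 0])]

def goodP6 : List (Matrix (Fin 4) (Fin 4) ℤ × Matrix (Fin 6) (Fin 6) ℤ) :=
  [(!![0, -1, 2, -2; 1, 0, 0, 0; -1, 0, 0, 1; 1, 0, -1, 0], !![0, 0, -1, 0, 1, -1; 0, 0, 0, -1, 1, -1; 1, 0, 0, 0, 0, 0; 0, 1, 0, 0, 0, 0; -1, -1, 0, 0, 0, 1; 1, 1, 0, 0, -1, 0]),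
  (!![0, 1, 0, 2; -1, 0, 0, 0; 0, 0, 0, -1; -1, 0, 1, 0], !![0, 0, 1, 0, 0, 1; 0, 0, 0, 1, 0, 1; -1, 0, 0, 0, 0, 0; 0, -1, 0, 0, 0, 0; 0, 0, 0, 0, 0, -1; -1, -1, 0, 0, 1, 0]),
  (!![0, 1, 0, 2; -1, 0, 0, 0; 0, 0, 0, -1; -1, 0, 1, 0], !![0, 0, 0, 1, 0, 1; 0, 0, 1, 0, 0, 1; 0, -1, 0, 0, 0, 0; -1, 0, 0, 0, 0, 0; 0, 0, 0, 0, 0, -1; -1, -1, 0, 0, 1, 0]),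
  (!![0, 1, 2, 0; -1, 0, 0, 0; -1, 0, 0, -1; 0, 0, 1, 0], !![0, 0, 0, 1, 1, 0; 0, 0, 1, 0, 1, 0; 0, -1, 0, 0, 0, 0; -1, 0, 0, 0, 0, 0; -1, -1, 0, 0, 0, -1; 0, 0, 0, 0, 1, 0]),
  (!![0, -1, -2, 0; 1, 0, 0, 0; 1, 0, 0, 1; 0, 0, -1, 0], !![0, 0, 0, -1, -1, 0; 0, 0, -1, 0, -1, 0; 0, 1, 0, 0, 0, 0; 1, 0, 0, 0, 0, 0; 1, 1, 0, 0, 0, 1; 0, 0, 0, 0, -1, 0]),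
  (!![0, -1, 0, 2; 1, 0, 0, 0; 0, 0, 0, 1; -1, 0, -1, 0], !![0, 0, 0, -1, 0, 1; 0, 0, -1, 0, 0, 1; 0, 1, 0, 0, 0, 0; 1, 0, 0, 0, 0, 0; 0, 0, 0, 0, 0, 1; -1, -1, 0, 0, -1, 0]),
  (!![0, -1, 0, 0; 1, 0, 2, -2; 0, -1, 0, 1; 0, 1, -1, 0], !![0, 0, 0, -1, 0, 0; 0, 0, -1, 0, 0, 0; 0, 1, 0, 0, 1, -1; 1, 0, 0, 0, 1, -1; 0, 0, -1, -1, 0, 1; 0, 0, 1, 1, -1, 0]),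
  (!![0, -1, 0, 2; 1, 0, 0, -2; 0, 0, 0, 1; -1, 1, -1, 0], !![0, 0, -1, 0, 0, 1; 0, 0, 0, -1, 0, 1; 1, 0, 0, 0, 0, -1; 0, 1, 0, 0, 0, -1; 0, 0, 0, 0, 0, 1; -1, -1, 1, 1, -1, 0]),
  (!![0, 1, 0, 0; -1, 0, -2, 2; 0, 1, 0, -1; 0, -1, 1, 0], !![0, 0, 0, 1, 0, 0; 0, 0, 1, 0, 0, 0; 0, -1, 0, 0, -1, 1; -1, 0, 0, 0, -1, 1; 0, 0, 1, 1, 0, -1; 0, 0, -1, -1, 1, 0]),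
  (!![0, 1, -2, 2; -1, 0, 0, 0; 1, 0, 0, -1; -1, 0, 1, 0], !![0, 0, 0, 1, -1, 1; 0, 0, 1, 0, -1, 1; 0, -1, 0, 0, 0, 0; -1, 0, 0, 0, 0, 0; 1, 1, 0, 0, 0, -1; -1, -1, 0, 0, 1, 0]),
  (!![0, 1, 2, -2; -1, 0, 0, 2; -1, 0, 0, 1; 1, -1, -1, 0], !![0, 0, 0, 1, 1, -1; 0, 0, 1, 0, 1, -1; 0, -1, 0, 0, 0, 1; -1, 0, 0, 0, 0, 1; -1, -1, 0, 0, 0, 1; 1, 1, -1, -1, -1, 0]),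
  (!![0, -1, 0, 0; 1, 0, 2, 0; 0, -1, 0, 1; 0, 0, -1, 0], !![0, 0, 0, -1, 0, 0; 0, 0, -1, 0, 0, 0; 0, 1, 0, 0, 1, 0; 1, 0, 0, 0, 1, 0; 0, 0, -1, -1, 0, 1; 0, 0, 0, 0, -1, 0])]

def goodP7 : List (Matrix (Fin 4) (Fin 4) ℤ × Matrix (Fin 6) (Fin 6) ℤ) :=
  [(!![0, -1, 0, 0; 1, 0, 0, -2; 0, 0, 0, 1; 0, 1, -1, 0], !![0, 0, 0, -1, 0, 0; 0, 0, -1, 0, 0, 0; 0, 1, 0, 0, 0, -1; 1, 0, 0, 0, 0, -1; 0, 0, 0, 0, 0, 1; 0, 0, 1, 1, -1, 0]),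
  (!![0, 1, -2, 0; -1, 0, 2, 0; 1, -1, 0, -1; 0, 0, 1, 0], !![0, 0, 0, 1, -1, 0; 0, 0, 1, 0, -1, 0; 0, -1, 0, 0, 1, 0; -1, 0, 0, 0, 1, 0; 1, 1, -1, -1, 0, -1; 0, 0, 0, 0, 1, 0]),
  (!![0, -1, 0, 2; 1, 0, 0, -2; 0, 0, 0, 1; -1, 1, -1, 0], !![0, 0, 0, -1, 0, 1; 0, 0, -1, 0, 0, 1; 0, 1, 0, 0, 0, -1; 1, 0, 0, 0, 0, -1; 0, 0, 0, 0, 0, 1; -1, -1, 1, 1, -1, 0]),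
  (!![0, 1, 0, 0; -1, 0, 0, -2; 0, 0, 0, -1; 0, 1, 1, 0], !![0, 0, 0, 1, 0, 0; 0, 0, 1, 0, 0, 0; 0, -1, 0, 0, 0, -1; -1, 0, 0, 0, 0, -1; 0, 0, 0, 0, 0, -1; 0, 0, 1, 1, 1, 0]),
  (!![0, -1, 0, 0; 1, 0, 0, 2; 0, 0, 0, 1; 0, -1, -1, 0], !![0, 0, 0, -1, 0, 0; 0, 0, -1, 0, 0, 0; 0, 1, 0, 0, 0, 1; 1, 0, 0, 0, 0, 1; 0, 0, 0, 0, 0, 1; 0, 0, -1, -1, -1, 0]),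
  (!![0, -1, -2, 2; 1, 0, 0, 0; 1, 0, 0, -1; -1, 0, 1, 0], !![0, 0, -1, 0, -1, 1; 0, 0, 0, -1, -1, 1; 1, 0, 0, 0, 0, 0; 0, 1, 0, 0, 0, 0; 1, 1, 0, 0, 0, -1; -1, -1, 0, 0, 1, 0]),
  (!![0, 1, 0, 0; -1, 0, 2, -2; 0, -1, 0, 1; 0, 1, -1, 0], !![0, 0, 0, 1, 0, 0; 0, 0, 1, 0, 0, 0; 0, -1, 0, 0, 1, -1; -1, 0, 0, 0, 1, -1; 0, 0, -1, -1, 0, 1; 0, 0, 1, 1, -1, 0]),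
  (!![0, 1, -2, 0; -1, 0, 2, 0; 1, -1, 0, 1; 0, 0, -1, 0], !![0, 0, 0, 1, -1, 0; 0, 0, 1, 0, -1, 0; 0, -1, 0, 0, 1, 0; -1, 0, 0, 0, 1, 0; 1, 1, -1, -1, 0, 1; 0, 0, 0, 0, -1, 0]),
  (!![0, -1, 0, 2; 1, 0, 0, -2; 0, 0, 0, -1; -1, 1, 1, 0], !![0, 0, -1, 0, 0, 1; 0, 0, 0, -1, 0, 1; 1, 0, 0, 0, 0, -1; 0, 1, 0, 0, 0, -1; 0, 0, 0, 0, 0, -1; -1, -1, 1, 1, 1, 0]),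
  (!![0, -1, 0, 2; 1, 0, 0, -2; 0, 0, 0, -1; -1, 1, 1, 0], !![0, 0, 0, -1, 0, 1; 0, 0, -1, 0, 0, 1; 0, 1, 0, 0, 0, -1; 1, 0, 0, 0, 0, -1; 0, 0, 0, 0, 0, -1; -1, -1, 1, 1, 1, 0]),
  (!![0, 1, -2, 0; -1, 0, 0, 0; 1, 0, 0, 1; 0, 0, -1, 0], !![0, 0, 0, 1, -1, 0; 0, 0, 1, 0, -1, 0; 0, -1, 0, 0, 0, 0; -1, 0, 0, 0, 0, 0; 1, 1, 0, 0, 0, 1; 0, 0, 0, 0, -1, 0]),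
  (!![0, -1, 0, 0; 1, 0, 2, 0; 0, -1, 0, -1; 0, 0, 1, 0], !![0, 0, 0, -1, 0, 0; 0, 0, -1, 0, 0, 0; 0, 1, 0, 0, 1, 0; 1, 0, 0, 0, 1, 0; 0, 0, -1, -1, 0, -1; 0, 0, 0, 0, 1, 0])]

def goodP8 : List (Matrix (Fin 4) (Fin 4) ℤ × Matrix (Fin 6) (Fin 6) ℤ) :=
  [(!![0, 1, 0, 0; -1, 0, -2, 0; 0, 1, 0, 1; 0, 0, -1, 0], !![0, 0, 0, 1, 0, 0; 0, 0, 1, 0, 0, 0; 0, -1, 0, 0, -1, 0; -1, 0, 0, 0, -1, 0; 0, 0, 1, 1, 0, 1; 0, 0, 0, 0, -1, 0]),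
  (!![0, 1, 0, 0; -1, 0, 2, 0; 0, -1, 0, 1; 0, 0, -1, 0], !![0, 0, 0, 1, 0, 0; 0, 0, 1, 0, 0, 0; 0, -1, 0, 0, 1, 0; -1, 0, 0, 0, 1, 0; 0, 0, -1, -1, 0, 1; 0, 0, 0, 0, -1, 0]),
  (!![0, 1, 0, 2; -1, 0, 0, 0; 0, 0, 0, 1; -1, 0, -1, 0], !![0, 0, 1, 0, 0, 1; 0, 0, 0, 1, 0, 1; -1, 0, 0, 0, 0, 0; 0, -1, 0, 0, 0, 0; 0, 0, 0, 0, 0, 1; -1, -1, 0, 0, -1, 0]),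
  (!![0, -1, 0, 2; 1, 0, 0, 0; 0, 0, 0, -1; -1, 0, 1, 0], !![0, 0, -1, 0, 0, 1; 0, 0, 0, -1, 0, 1; 1, 0, 0, 0, 0, 0; 0, 1, 0, 0, 0, 0; 0, 0, 0, 0, 0, -1; -1, -1, 0, 0, 1, 0]),
  (!![0, -1, 0, -2; 1, 0, 0, 0; 0, 0, 0, -1; 1, 0, 1, 0], !![0, 0, -1, 0, 0, -1; 0, 0, 0, -1, 0, -1; 1, 0, 0, 0, 0, 0; 0, 1, 0, 0, 0, 0; 0, 0, 0, 0, 0, -1; 1, 1, 0, 0, 1, 0]),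
  (!![0, 1, 0, -2; -1, 0, 0, 0; 0, 0, 0, 1; 1, 0, -1, 0], !![0, 0, 1, 0, 0, -1; 0, 0, 0, 1, 0, -1; -1, 0, 0, 0, 0, 0; 0, -1, 0, 0, 0, 0; 0, 0, 0, 0, 0, 1; 1, 1, 0, 0, -1, 0]),
  (!![0, -1, 0, -2; 1, 0, 0, 0; 0, 0, 0, -1; 1, 0, 1, 0], !![0, 0, 0, -1, 0, -1; 0, 0, -1, 0, 0, -1; 0, 1, 0, 0, 0, 0; 1, 0, 0, 0, 0, 0; 0, 0, 0, 0, 0, -1; 1, 1, 0, 0, 1, 0]),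
  (!![0, 1, 0, 2; -1, 0, 0, 0; 0, 0, 0, 1; -1, 0, -1, 0], !![0, 0, 0, 1, 0, 1; 0, 0, 1, 0, 0, 1; 0, -1, 0, 0, 0, 0; -1, 0, 0, 0, 0, 0; 0, 0, 0, 0, 0, 1; -1, -1, 0, 0, -1, 0]),
  (!![0, -1, 2, 0; 1, 0, 0, 0; -1, 0, 0, -1; 0, 0, 1, 0], !![0, 0, 0, -1, 1, 0; 0, 0, -1, 0, 1, 0; 0, 1, 0, 0, 0, 0; 1, 0, 0, 0, 0, 0; -1, -1, 0, 0, 0, -1; 0, 0, 0, 0, 1, 0]),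
  (!![0, 1, 2, 0; -1, 0, 0, 0; -1, 0, 0, 1; 0, 0, -1, 0], !![0, 0, 0, 1, 1, 0; 0, 0, 1, 0, 1, 0; 0, -1, 0, 0, 0, 0; -1, 0, 0, 0, 0, 0; -1, -1, 0, 0, 0, 1; 0, 0, 0, 0, -1, 0]),
  (!![0, -1, 0, 0; 1, 0, -2, 0; 0, 1, 0, -1; 0, 0, 1, 0], !![0, 0, 0, -1, 0, 0; 0, 0, -1, 0, 0, 0; 0, 1, 0, 0, -1, 0; 1, 0, 0, 0, -1, 0; 0, 0, 1, 1, 0, -1; 0, 0, 0, 0, 1, 0]),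
  (!![0, -1, 0, 0; 1, 0, 0, 2; 0, 0, 0, -1; 0, -1, 1, 0], !![0, 0, 0, -1, 0, 0; 0, 0, -1, 0, 0, 0; 0, 1, 0, 0, 0, 1; 1, 0, 0, 0, 0, 1; 0, 0, 0, 0, 0, -1; 0, 0, -1, -1, 1, 0])]

def goodP9 : List (Matrix (Fin 4) (Fin 4) ℤ × Matrix (Fin 6) (Fin 6) ℤ) :=
  [(!![0, 1, 0, 0; -1, 0, 0, -2; 0, 0, 0, 1; 0, 1, -1, 0], !![0, 0, 0, 1, 0, 0; 0, 0, 1, 0, 0, 0; 0, -1, 0, 0, 0, -1; -1, 0, 0, 0, 0, -1; 0, 0, 0, 0, 0, 1; 0, 0, 1, 1, -1, 0]),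
  (!![0, -1, -2, 2; 1, 0, 0, 0; 1, 0, 0, -1; -1, 0, 1, 0], !![0, 0, 0, -1, -1, 1; 0, 0, -1, 0, -1, 1; 0, 1, 0, 0, 0, 0; 1, 0, 0, 0, 0, 0; 1, 1, 0, 0, 0, -1; -1, -1, 0, 0, 1, 0]),
  (!![0, 1, 0, -2; -1, 0, 0, 0; 0, 0, 0, 1; 1, 0, -1, 0], !![0, 0, 0, 1, 0, -1; 0, 0, 1, 0, 0, -1; 0, -1, 0, 0, 0, 0; -1, 0, 0, 0, 0, 0; 0, 0, 0, 0, 0, 1; 1, 1, 0, 0, -1, 0]),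
  (!![0, 1, 0, 0; -1, 0, 0, 2; 0, 0, 0, 1; 0, -1, -1, 0], !![0, 0, 0, 1, 0, 0; 0, 0, 1, 0, 0, 0; 0, -1, 0, 0, 0, 1; -1, 0, 0, 0, 0, 1; 0, 0, 0, 0, 0, 1; 0, 0, -1, -1, -1, 0]),
  (!![0, -1, 0, -2; 1, 0, 0, 0; 0, 0, 0, 1; 1, 0, -1, 0], !![0, 0, -1, 0, 0, -1; 0, 0, 0, -1, 0, -1; 1, 0, 0, 0, 0, 0; 0, 1, 0, 0, 0, 0; 0, 0, 0, 0, 0, 1; 1, 1, 0, 0, -1, 0]),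
  (!![0, 1, 0, 0; -1, 0, -2, 0; 0, 1, 0, -1; 0, 0, 1, 0], !![0, 0, 0, 1, 0, 0; 0, 0, 1, 0, 0, 0; 0, -1, 0, 0, -1, 0; -1, 0, 0, 0, -1, 0; 0, 0, 1, 1, 0, -1; 0, 0, 0, 0, 1, 0]),
  (!![0, 1, 0, 0; -1, 0, 0, 2; 0, 0, 0, -1; 0, -1, 1, 0], !![0, 0, 0, 1, 0, 0; 0, 0, 1, 0, 0, 0; 0, -1, 0, 0, 0, 1; -1, 0, 0, 0, 0, 1; 0, 0, 0, 0, 0, -1; 0, 0, -1, -1, 1, 0]),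
  (!![0, -1, 2, 0; 1, 0, 0, 0; -1, 0, 0, 1; 0, 0, -1, 0], !![0, 0, 0, -1, 1, 0; 0, 0, -1, 0, 1, 0; 0, 1, 0, 0, 0, 0; 1, 0, 0, 0, 0, 0; -1, -1, 0, 0, 0, 1; 0, 0, 0, 0, -1, 0]),
  (!![0, -1, 0, 0; 1, 0, -2, 0; 0, 1, 0, 1; 0, 0, -1, 0], !![0, 0, 0, -1, 0, 0; 0, 0, -1, 0, 0, 0; 0, 1, 0, 0, -1, 0; 1, 0, 0, 0, -1, 0; 0, 0, 1, 1, 0, 1; 0, 0, 0, 0, -1, 0]),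
  (!![0, 1, 0, -2; -1, 0, 0, 0; 0, 0, 0, -1; 1, 0, 1, 0], !![0, 0, 1, 0, 0, -1; 0, 0, 0, 1, 0, -1; -1, 0, 0, 0, 0, 0; 0, -1, 0, 0, 0, 0; 0, 0, 0, 0, 0, -1; 1, 1, 0, 0, 1, 0]),
  (!![0, 1, 0, -2; -1, 0, 0, 0; 0, 0, 0, -1; 1, 0, 1, 0], !![0, 0, 0, 1, 0, -1; 0, 0, 1, 0, 0, -1; 0, -1, 0, 0, 0, 0; -1, 0, 0, 0, 0, 0; 0, 0, 0, 0, 0, -1; 1, 1, 0, 0, 1, 0]),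
  (!![0, -1, 0, -2; 1, 0, 0, 0; 0, 0, 0, 1; 1, 0, -1, 0], !![0, 0, 0, -1, 0, -1; 0, 0, -1, 0, 0, -1; 0, 1, 0, 0, 0, 0; 1, 0, 0, 0, 0, 0; 0, 0, 0, 0, 0, 1; 1, 1, 0, 0, -1, 0])]

def goodP : List (Matrix (Fin 4) (Fin 4) ℤ × Matrix (Fin 6) (Fin 6) ℤ) :=
  goodP0 ++ goodP1 ++ goodP2 ++ goodP3 ++ goodP4 ++ goodP5 ++ goodP6 ++ goodP7 ++ goodP8 ++ goodP9

set_option maxHeartbeats 16000000 in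
set_option maxRecDepth 100000 in
lemma goodP_closed0 : ∀ p ∈ goodP0, ∀ i : Fin 4,
    (mutate p.1 i, (fibList i).foldl mutate p.2) ∈ goodP := by decide

set_option maxHeartbeats 16000000 in
set_option maxRecDepth 100000 in
lemma goodP_closed1 : ∀ p ∈ goodP1, ∀ i : Fin 4,
    (mutate p.1 i, (fibList i).foldl mutate p.2) ∈ goodP := by decide

set_option maxHeartbeats 16000000 in
set_option maxRecDepth 100000 in
lemma goodP_closed2 : ∀ p ∈ goodP2, ∀ i : Fin 4,
    (mutate p.1 i, (fibList i).foldl mutate p.2) ∈ goodP := by decide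

set_option maxHeartbeats 16000000 in
set_option maxRecDepth 100000 in
lemma goodP_closed3 : ∀ p ∈ goodP3, ∀ i : Fin 4,
    (mutate p.1 i, (fibList i).foldl mutate p.2) ∈ goodP := by decide

set_option maxHeartbeats 16000000 in
set_option maxRecDepth 100000 in
lemma goodP_closed4 : ∀ p ∈ goodP4, ∀ i : Fin 4,
    (mutate p.1 i, (fibList i).foldl mutate p.2) ∈ goodP := by decide

set_option maxHeartbeats 16000000 in
set_option maxRecDepth 100000 in
lemma goodP_closed5 : ∀ p ∈ goodP5, ∀ i : Fin 4,
    (mutate p.1 i, (fibList i).foldl mutate p.2) ∈ goodP := by decide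

set_option maxHeartbeats 16000000 in
set_option maxRecDepth 100000 in
lemma goodP_closed6 : ∀ p ∈ goodP6, ∀ i : Fin 4,
    (mutate p.1 i, (fibList i).foldl mutate p.2) ∈ goodP := by decide

set_option maxHeartbeats 16000000 in
set_option maxRecDepth 100000 in
lemma goodP_closed7 : ∀ p ∈ goodP7, ∀ i : Fin 4,
    (mutate p.1 i, (fibList i).foldl mutate p.2) ∈ goodP := by decide

set_option maxHeartbeats 16000000 in
set_option maxRecDepth 100000 in
lemma goodP_closed8 : ∀ p ∈ goodP8, ∀ i : Fin 4,
    (mutate p.1 i, (fibList i).foldl mutate p.2) ∈ goodP := by decide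

set_option maxHeartbeats 16000000 in
set_option maxRecDepth 100000 in
lemma goodP_closed9 : ∀ p ∈ goodP9, ∀ i : Fin 4,
    (mutate p.1 i, (fibList i).foldl mutate p.2) ∈ goodP := by decide

lemma goodP_closed : ∀ p ∈ goodP, ∀ i : Fin 4,
    (mutate p.1 i, (fibList i).foldl mutate p.2) ∈ goodP := by
  intro p hp i
  simp only [goodP, List.mem_append, or_assoc] at hp
  rcases hp with h|h|h|h|h|h|h|h|h|h
  exacts [goodP_closed0 p h i, goodP_closed1 p h i, goodP_closed2 p h i, goodP_closed3 p h i, goodP_closed4 p h i, goodP_closed5 p h i, goodP_closed6 p h i, goodP_closed7 p h i, goodP_closed8 p h i, goodP_closed9 p h i]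

instance decLeMatEntry {n : ℕ} (M : Matrix (Fin n) (Fin n) ℤ) (a b : Fin n) : Decidable (0 ≤ M a b) :=
  Int.decLe _ _

instance decEqMatEntry {n : ℕ} (M : Matrix (Fin n) (Fin n) ℤ) (a b : Fin n) (x : ℤ) : Decidable (x = M a b) :=
  Int.decEq _ _

set_option maxHeartbeats 16000000 in
set_option maxRecDepth 100000 in
lemma goodP_conds : ∀ p ∈ goodP,
    SatisfiesUnfoldingConds (![0, 0, 1, 1, 2, 3] : Fin 6 → Fin 4) p.1 p.2 := by
  simp only [SatisfiesUnfoldingConds]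
  decide

lemma goodP_invariant : ∀ (l : List (Fin 4)), ∀ p ∈ goodP,
    (l.foldl mutate p.1, l.foldl (compMutate (![0, 0, 1, 1, 2, 3] : Fin 6 → Fin 4)) p.2)
      ∈ goodP := by
  intro l
  induction l with
  | nil => intro p hp; exact hp
  | cons k l ih =>
    intro p hp
    have h := goodP_closed p hp k
    have h2 := ih _ h
    simpa [List.foldl_cons, compMutate_eq] using h2

/-- The mutation-finite matrix of type `F_4` admits the stated unfolding, with
`E_1 = {1, 2}`, `E_2 = {3, 4}`, `E_3 = {5}`, `E_4 = {6}`. -/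
theorem unfolding_F4 :
    IsUnfolding (![0, 0, 1, 1, 2, 3] : Fin 6 → Fin 4)
      !![0, 1, 0, 0; -1, 0, 2, 0; 0, -1, 0, 1; 0, 0, -1, 0]
      !![0, 0, 1, 0, 0, 0; 0, 0, 0, 1, 0, 0; -1, 0, 0, 0, 1, 0;
         0, -1, 0, 0, 1, 0; 0, 0, -1, -1, 0, 1; 0, 0, 0, 0, -1, 0] := by
  intro l
  have h0 : (!![0, 1, 0, 0; -1, 0, 2, 0; 0, -1, 0, 1; 0, 0, -1, 0],
      !![0, 0, 1, 0, 0, 0; 0, 0, 0, 1, 0, 0; -1, 0, 0, 0, 1, 0;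
         0, -1, 0, 0, 1, 0; 0, 0, -1, -1, 0, 1; 0, 0, 0, 0, -1, 0]) ∈ goodP := by
    have : (!![0, 1, 0, 0; -1, 0, 2, 0; 0, -1, 0, 1; 0, 0, -1, 0],
      !![0, 0, 1, 0, 0, 0; 0, 0, 0, 1, 0, 0; -1, 0, 0, 0, 1, 0;
         0, -1, 0, 0, 1, 0; 0, 0, -1, -1, 0, 1; 0, 0, 0, 0, -1, 0]) ∈ goodP0 :=
      List.mem_cons_self
    simp only [goodP, List.mem_append]
    tauto
  exact goodP_conds _ (goodP_invariant l _ h0)
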